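/- Let 0 < α < 1 and let T be a map on positive continuous functions on a compact set K with the property: if v ≤ w pointwise then T(w) ≤ T(v), and T(c·v) = c^{-α}·T(v) for every constant c > 0. If u₁, u₂ are fixed points of T and there exists C ≥ 1 with u₂ ≤ C·u₁ and u₁ ≤ C·u₂, then u₁ = u₂. -/

import Mathlib

open Real

theorem stmt_5 (K : Type*) [TopologicalSpace K] [CompactSpace K]
    (α : ℝ) (hα0 : 0 < α) (hα1 : α < 1)
    (T : C(K, ℝ) → C(K, ℝ))
    (hmono : ∀ v w : C(K, ℝ), (∀ x, 0 < v x) → (∀ x, 0 < w x) →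
      (∀ x, v x ≤ w x) → ∀ x, T w x ≤ T v x)
    (hhom : ∀ v : C(K, ℝ), (∀ x, 0 < v x) → ∀ c : ℝ, 0 < c → T (c • v) = c ^ (-α) • T v)
    (u₁ u₂ : C(K, ℝ)) (h1 : ∀ x, 0 < u₁ x) (h2 : ∀ x, 0 < u₂ x)
    (hf1 : T u₁ = u₁) (hf2 : T u₂ = u₂)
    (C : ℝ) (hC : 1 ≤ C) (h12 : ∀ x, u₂ x ≤ C * u₁ x) (h21 : ∀ x, u₁ x ≤ C * u₂ x) :
    u₁ = u₂ := by
  have hC0 : (0:ℝ) < C := lt_of_lt_of_le one_pos hC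
  -- key step: comparison reverses with exponent multiplied by α
  have key : ∀ (v w : C(K, ℝ)), (∀ x, 0 < v x) → (∀ x, 0 < w x) →
      T v = v → T w = w → ∀ t : ℝ, (∀ x, w x ≤ C ^ t * v x) →
      ∀ x, v x ≤ C ^ (t * α) * w x := by
    intro v w hv hw hfv hfw t hle x
    have hCt : 0 < C ^ t := rpow_pos_of_pos hC0 t
    have hpos : ∀ y, 0 < ((C ^ t) • v) y := fun y => by
      simpa using mul_pos hCt (hv y)
    have hm := hmono w ((C ^ t) • v) hw hpos (fun y => by simpa using hle y) x
    rw [hhom v hv (C ^ t) hCt, hfw, hfv] at hm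
    have hm' : (C ^ t) ^ (-α) * v x ≤ w x := by simpa using hm
    have heq : (C ^ t) ^ (-α) = (C ^ (t * α))⁻¹ := by
      rw [← Real.rpow_mul hC0.le, mul_neg, Real.rpow_neg hC0.le]
    rw [heq] at hm'
    have htα : 0 < C ^ (t * α) := rpow_pos_of_pos hC0 _
    calc v x = C ^ (t * α) * ((C ^ (t * α))⁻¹ * v x) := by
          field_simp
      _ ≤ C ^ (t * α) * w x := by
          exact mul_le_mul_of_nonneg_left hm' htα.le
  -- iterate: u₂ ≤ C^(α^(2n)) u₁ for all n
  have iter : ∀ n : ℕ, ∀ x, u₂ x ≤ C ^ (α ^ (2 * n)) * u₁ x := by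
    intro n
    induction n with
    | zero => intro x; simpa using h12 x
    | succ n ih =>
        have step1 := key u₁ u₂ h1 h2 hf1 hf2 _ ih
        have step2 := key u₂ u₁ h2 h1 hf2 hf1 _ step1
        intro x
        have := step2 x
        have hexp : α ^ (2 * n) * α * α = α ^ (2 * (n + 1)) := by ring
        rwa [hexp] at this
  have iter' : ∀ n : ℕ, ∀ x, u₁ x ≤ C ^ (α ^ (2 * n) * α) * u₂ x := by
    intro n
    exact key u₁ u₂ h1 h2 hf1 hf2 _ (iter n)
  -- limits
  have hαlt : |α| < 1 := by rw [abs_of_pos hα0]; exact hα1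
  have htend : Filter.Tendsto (fun n : ℕ => α ^ (2 * n)) Filter.atTop (nhds 0) := by
    have hsq : |α ^ 2| < 1 := by
      rw [abs_pow]
      exact pow_lt_one₀ (abs_nonneg α) hαlt (by norm_num)
    simp_rw [pow_mul]
    exact tendsto_pow_atTop_nhds_zero_of_abs_lt_one hsq
  have hrpow : Filter.Tendsto (fun n : ℕ => C ^ (α ^ (2 * n))) Filter.atTop (nhds 1) := by
    have hcont : Continuous fun t : ℝ => C ^ t := by
      exact continuous_const.rpow continuous_id (fun _ => Or.inl hC0.ne')
    have := (hcont.tendsto 0).comp htend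
    simpa [Function.comp_def] using this
  have hrpow' : Filter.Tendsto (fun n : ℕ => C ^ (α ^ (2 * n) * α)) Filter.atTop (nhds 1) := by
    have hcont : Continuous fun t : ℝ => C ^ (t * α) := by
      exact continuous_const.rpow (continuous_id.mul continuous_const)
        (fun _ => Or.inl hC0.ne')
    have := (hcont.tendsto 0).comp htend
    simpa [Function.comp_def] using this
  have hle21 : ∀ x, u₂ x ≤ u₁ x := by
    intro x
    have : Filter.Tendsto (fun n : ℕ => C ^ (α ^ (2 * n)) * u₁ x) Filter.atTop
        (nhds (u₁ x)) := by simpa using hrpow.mul_const (u₁ x)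
    exact ge_of_tendsto this (Filter.Eventually.of_forall fun n => iter n x)
  have hle12 : ∀ x, u₁ x ≤ u₂ x := by
    intro x
    have : Filter.Tendsto (fun n : ℕ => C ^ (α ^ (2 * n) * α) * u₂ x) Filter.atTop
        (nhds (u₂ x)) := by simpa using hrpow'.mul_const (u₂ x)
    exact ge_of_tendsto this (Filter.Eventually.of_forall fun n => iter' n x)
  ext x
  exact le_antisymm (hle12 x) (hle21 x)
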